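/- For all real numbers x ≥ 0 and y ≥ 0 one has Φ̄(−x−y) − e^{−2xy}·Φ̄(−x+y) ≤ 2·y·(φ(x) + x). -/

import Mathlib

open Real Filter MeasureTheory

/-- Standard normal density. -/
noncomputable def stdPhi (u : ℝ) : ℝ := (Real.sqrt (2 * Real.pi))⁻¹ * Real.exp (-u ^ 2 / 2)

/-- Standard normal distribution function. -/
noncomputable def stdCdf (u : ℝ) : ℝ := ∫ s in Set.Iic u, stdPhi s

/-- Standard normal survivor function. -/
noncomputable def stdSurv (u : ℝ) : ℝ := 1 - stdCdf u

noncomputable def fFun (x y : ℝ) : ℝ := stdSurv (x - y) - Real.exp (2 * x * y) * stdSurv (x + y)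

noncomputable def gFun (x y : ℝ) : ℝ := 1 - x * stdSurv (x + y) / stdPhi (x + y)

lemma stdPhi_nonneg (u : ℝ) : 0 ≤ stdPhi u := by
  unfold stdPhi
  positivity

lemma stdPhi_eq (u : ℝ) : stdPhi u = (Real.sqrt (2 * Real.pi))⁻¹ * Real.exp (-(1/2) * u ^ 2) := by
  unfold stdPhi; ring_nf

lemma stdPhi_integrable : Integrable stdPhi := by
  have h := (integrable_exp_neg_mul_sq (by norm_num : (0:ℝ) < 1/2)).const_mul
    (Real.sqrt (2 * Real.pi))⁻¹
  refine h.congr (Eventually.of_forall fun u => ?_)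
  rw [stdPhi_eq]

lemma integral_stdPhi : ∫ u, stdPhi u = 1 := by
  have h : ∫ u : ℝ, stdPhi u =
      (Real.sqrt (2 * Real.pi))⁻¹ * ∫ u : ℝ, Real.exp (-(1/2) * u ^ 2) := by
    rw [← integral_const_mul]
    exact integral_congr_ae (Eventually.of_forall fun u => stdPhi_eq u)
  rw [h, integral_gaussian]
  have : Real.pi / (1/2) = 2 * Real.pi := by ring
  rw [this, inv_mul_cancel₀]
  positivity

lemma stdCdf_nonneg (u : ℝ) : 0 ≤ stdCdf u :=
  setIntegral_nonneg measurableSet_Iic fun s _ => stdPhi_nonneg s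

lemma stdCdf_le_one (u : ℝ) : stdCdf u ≤ 1 := by
  rw [← integral_stdPhi]
  exact setIntegral_le_integral stdPhi_integrable
    (Eventually.of_forall fun s => stdPhi_nonneg s)

lemma stdSurv_nonneg (u : ℝ) : 0 ≤ stdSurv u := by
  have := stdCdf_le_one u; unfold stdSurv; linarith

lemma stdSurv_le_one (u : ℝ) : stdSurv u ≤ 1 := by
  have := stdCdf_nonneg u; unfold stdSurv; linarith

lemma stdPhi_continuous : Continuous stdPhi := by
  unfold stdPhi; fun_prop

lemma hasDerivAt_stdCdf (u : ℝ) : HasDerivAt stdCdf (stdPhi u) u := by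
  have hrepr : stdCdf = fun v => stdCdf 0 + ∫ t in (0:ℝ)..v, stdPhi t := by
    funext v
    have := intervalIntegral.integral_Iic_sub_Iic
      (stdPhi_integrable.integrableOn (s := Set.Iic (0:ℝ)))
      (stdPhi_integrable.integrableOn (s := Set.Iic v))
    unfold stdCdf
    linarith [this]
  rw [hrepr]
  have h := intervalIntegral.integral_hasDerivAt_right
    (stdPhi_integrable.intervalIntegrable (a := 0) (b := u))
    (stdPhi_continuous.stronglyMeasurableAtFilter _ _)
    (stdPhi_continuous.continuousAt (x := u))
  exact h.const_add (stdCdf 0)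

lemma hasDerivAt_stdSurv (u : ℝ) : HasDerivAt stdSurv (-(stdPhi u)) u :=
  (hasDerivAt_stdCdf u).const_sub 1

lemma stdPhi_anti {a b : ℝ} (ha : 0 ≤ a) (hab : a ≤ b) : stdPhi b ≤ stdPhi a := by
  unfold stdPhi
  have : Real.exp (-b ^ 2 / 2) ≤ Real.exp (-a ^ 2 / 2) := by
    apply Real.exp_le_exp.2
    nlinarith
  have h0 : (0:ℝ) ≤ (Real.sqrt (2 * Real.pi))⁻¹ := by positivity
  exact mul_le_mul_of_nonneg_left this h0

lemma exp_mul_stdPhi (x t : ℝ) :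
    Real.exp (-(2 * x * t)) * stdPhi (-x + t) = stdPhi (x + t) := by
  unfold stdPhi
  rw [← mul_assoc, mul_comm (Real.exp _), mul_assoc, ← Real.exp_add]
  congr 1
  ring

/-- Upper bound Φ̄(−x−y) − e^{−2xy}Φ̄(−x+y) ≤ 2y(φ(x) + x) for x, y ≥ 0. -/
theorem surv_diff_le (x y : ℝ) (hx : 0 ≤ x) (hy : 0 ≤ y) :
    stdSurv (-x - y) - Real.exp (-(2 * x * y)) * stdSurv (-x + y) ≤
      2 * y * (stdPhi x + x) := by
  set F : ℝ → ℝ := fun t => stdSurv (-x - t) - Real.exp (-(2 * x * t)) * stdSurv (-x + t)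
    with hF
  set F' : ℝ → ℝ := fun t => stdPhi (-x - t) +
      (2 * x * Real.exp (-(2 * x * t)) * stdSurv (-x + t) +
        Real.exp (-(2 * x * t)) * stdPhi (-x + t)) with hF'
  have hderiv : ∀ t : ℝ, HasDerivAt F (F' t) t := by
    intro t
    have h1 : HasDerivAt (fun s : ℝ => stdSurv (-x - s)) (stdPhi (-x - t)) t := by
      have hin : HasDerivAt (fun s : ℝ => -x - s) (-1) t := by
        simpa using (hasDerivAt_id t).const_sub (-x)
      have := (hasDerivAt_stdSurv (-x - t)).comp t hin
      exact this.congr_deriv (by ring)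
    have h2 : HasDerivAt (fun s : ℝ => Real.exp (-(2 * x * s)))
        (-(2 * x) * Real.exp (-(2 * x * t))) t := by
      have hin : HasDerivAt (fun s : ℝ => -(2 * x * s)) (-(2 * x)) t := by
        have := ((hasDerivAt_id t).const_mul (2 * x)).neg
        rw [mul_one] at this
        exact this
      have := (Real.hasDerivAt_exp (-(2 * x * t))).comp t hin
      exact this.congr_deriv (by ring)
    have h3 : HasDerivAt (fun s : ℝ => stdSurv (-x + s)) (-(stdPhi (-x + t))) t := by
      have hin : HasDerivAt (fun s : ℝ => -x + s) (1) t := by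
        simpa using (hasDerivAt_id t).const_add (-x)
      have := (hasDerivAt_stdSurv (-x + t)).comp t hin
      exact this.congr_deriv (by ring)
    have h4 := h2.mul h3
    have h5 := h1.sub h4
    exact h5.congr_deriv (by simp only [hF']; ring)
  have hbound : ∀ t ∈ Set.Ico (0:ℝ) y, ‖F' t‖ ≤ 2 * (stdPhi x + x) := by
    intro t ht
    have ht0 : 0 ≤ t := ht.1
    have hE : Real.exp (-(2 * x * t)) ≤ 1 := by
      apply Real.exp_le_one_iff.2; nlinarith
    have hE0 : 0 ≤ Real.exp (-(2 * x * t)) := (Real.exp_pos _).le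
    have hS0 : 0 ≤ stdSurv (-x + t) := stdSurv_nonneg _
    have hS1 : stdSurv (-x + t) ≤ 1 := stdSurv_le_one _
    have h1 : stdPhi (-x - t) ≤ stdPhi x := by
      have : stdPhi (-x - t) = stdPhi (x + t) := by
        unfold stdPhi; ring_nf
      rw [this]
      exact stdPhi_anti hx (by linarith)
    have h2 : Real.exp (-(2 * x * t)) * stdPhi (-x + t) ≤ stdPhi x := by
      rw [exp_mul_stdPhi]
      exact stdPhi_anti hx (by linarith)
    have hES : Real.exp (-(2 * x * t)) * stdSurv (-x + t) ≤ 1 :=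
      mul_le_one₀ hE hS0 hS1
    have h3 : 2 * x * Real.exp (-(2 * x * t)) * stdSurv (-x + t) ≤ 2 * x := by
      nlinarith [mul_le_mul_of_nonneg_left hES (by linarith : (0:ℝ) ≤ 2 * x)]
    have hnn : 0 ≤ F' t := by
      have := stdPhi_nonneg (-x - t)
      have := stdPhi_nonneg (-x + t)
      simp only [hF']
      positivity
    rw [Real.norm_eq_abs, abs_of_nonneg hnn]
    simp only [hF']
    linarith
  have key := norm_image_sub_le_of_norm_deriv_le_segment'
    (f := F) (f' := F') (a := 0) (b := y) (C := 2 * (stdPhi x + x))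
    (fun t _ => (hderiv t).hasDerivWithinAt) hbound y ⟨hy, le_refl y⟩
  have hF0 : F 0 = 0 := by
    simp only [hF, mul_zero, neg_zero, Real.exp_zero, one_mul]
    norm_num
  rw [hF0, sub_zero, sub_zero, Real.norm_eq_abs] at key
  have : F y ≤ 2 * (stdPhi x + x) * y := le_trans (le_abs_self _) key
  calc stdSurv (-x - y) - Real.exp (-(2 * x * y)) * stdSurv (-x + y) = F y := rfl
    _ ≤ 2 * (stdPhi x + x) * y := this
    _ = 2 * y * (stdPhi x + x) := by ring
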